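/- For an overlapping masked IFS, the set Ω̄_q = Ω_q^+ ∪ Ω_q^- is the topological closure of Ω_q^+ and also the topological closure of Ω_q^- in the product space {0,1}^∞. -/

import Mathlib

open Set Filter Topology

/-- Strict lexicographic order on binary strings. -/
def lexLt (σ ω : ℕ → Bool) : Prop :=
  ∃ k, (∀ j < k, σ j = ω j) ∧ σ k < ω k

/-- Lexicographic order on binary strings. -/
def lexLe (σ ω : ℕ → Bool) : Prop := lexLt σ ω ∨ σ = ω

/-- n-fold shift. -/
def shiftn (n : ℕ) (ω : ℕ → Bool) : ℕ → Bool := fun k => ω (k + n)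

/-- Plus dynamical system: boundary point goes to the 0-branch inverse `g1` side, i.e. `x ≥ q` uses `g1`. -/
noncomputable def Tplus (g0 g1 : ℝ → ℝ) (q : ℝ) (x : ℝ) : ℝ := if x < q then g0 x else g1 x

noncomputable def Tminus (g0 g1 : ℝ → ℝ) (q : ℝ) (x : ℝ) : ℝ := if x ≤ q then g0 x else g1 x

/-- Itinerary under the plus system. -/
noncomputable def tauPlus (g0 g1 : ℝ → ℝ) (q : ℝ) (x : ℝ) : ℕ → Bool :=
  fun n => decide (q ≤ (Tplus g0 g1 q)^[n] x)

/-- Itinerary under the minus system. -/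
noncomputable def tauMinus (g0 g1 : ℝ → ℝ) (q : ℝ) (x : ℝ) : ℕ → Bool :=
  fun n => decide (q < (Tminus g0 g1 q)^[n] x)

/-- Coding map of the uniform IFS with ratio `a`. -/
noncomputable def piU (a : ℝ) (ω : ℕ → Bool) : ℝ := (1 - a) * ∑' k : ℕ, (cond (ω k) (a ^ k) 0)

/-- `wordMap u0 u1 σ k = f_{σ|k} = f_{σ 0} ∘ ⋯ ∘ f_{σ k}`. -/
def wordMap (u0 u1 : ℝ → ℝ) (σ : ℕ → Bool) : ℕ → ℝ → ℝ
  | 0 => cond (σ 0) u1 u0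
  | (k+1) => fun x => wordMap u0 u1 σ k ((cond (σ (k+1)) u1 u0) x)

/-- Coding map of the IFS `(u0, u1)`. -/
noncomputable def piCode (u0 u1 : ℝ → ℝ) (σ : ℕ → Bool) : ℝ :=
  limUnder atTop (fun k => wordMap u0 u1 σ k 0)

/-- `h` is a homeomorphism of `[0,1]` onto itself. -/
def IsIccHomeo (h : ℝ → ℝ) : Prop :=
  ∃ h' : ℝ → ℝ, ContinuousOn h (Icc 0 1) ∧ ContinuousOn h' (Icc 0 1) ∧
    MapsTo h (Icc 0 1) (Icc 0 1) ∧ MapsTo h' (Icc 0 1) (Icc 0 1) ∧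
    (∀ x ∈ Icc (0:ℝ) 1, h' (h x) = x) ∧ (∀ y ∈ Icc (0:ℝ) 1, h (h' y) = y)

structure Ctx (f0 f1 g0 g1 : ℝ → ℝ) (q c : ℝ) : Prop where
  hf0m : StrictMonoOn f0 (Icc 0 1)
  hf1m : StrictMonoOn f1 (Icc 0 1)
  hf0c : ContinuousOn f0 (Icc 0 1)
  hf1c : ContinuousOn f1 (Icc 0 1)
  hf0map : MapsTo f0 (Icc 0 1) (Icc 0 1)
  hf1map : MapsTo f1 (Icc 0 1) (Icc 0 1)
  hc0 : 0 ≤ c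
  hc1 : c < 1
  hf0lip : ∀ x ∈ Icc (0:ℝ) 1, ∀ y ∈ Icc (0:ℝ) 1, |f0 x - f0 y| ≤ c * |x - y|
  hf1lip : ∀ x ∈ Icc (0:ℝ) 1, ∀ y ∈ Icc (0:ℝ) 1, |f1 x - f1 y| ≤ c * |x - y|
  hf00 : f0 0 = 0
  hf11 : f1 1 = 1
  hf10pos : 0 < f1 0
  hq1 : f1 0 < q
  hq2 : q < f0 1
  hf01lt : f0 1 < 1
  hg0 : ∀ x ∈ Icc (0:ℝ) 1, g0 (f0 x) = x
  hg1 : ∀ x ∈ Icc (0:ℝ) 1, g1 (f1 x) = x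

namespace Ctx

variable {f0 f1 g0 g1 : ℝ → ℝ} {q c : ℝ} (H : Ctx f0 f1 g0 g1 q c)
include H

lemma hq0 : 0 < q := H.hf10pos.trans H.hq1
lemma hqlt1 : q < 1 := H.hq2.trans H.hf01lt

lemma fb_mono (b : Bool) : StrictMonoOn (cond b f1 f0) (Icc 0 1) := by cases b <;> [exact H.hf0m; exact H.hf1m]
lemma fb_cont (b : Bool) : ContinuousOn (cond b f1 f0) (Icc 0 1) := by cases b <;> [exact H.hf0c; exact H.hf1c]
lemma fb_map (b : Bool) : MapsTo (cond b f1 f0) (Icc 0 1) (Icc 0 1) := by cases b <;> [exact H.hf0map; exact H.hf1map]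
lemma fb_lip (b : Bool) : ∀ x ∈ Icc (0:ℝ) 1, ∀ y ∈ Icc (0:ℝ) 1, |cond b f1 f0 x - cond b f1 f0 y| ≤ c * |x - y| := by
  cases b <;> [exact H.hf0lip; exact H.hf1lip]
lemma gb_inv (b : Bool) : ∀ x ∈ Icc (0:ℝ) 1, cond b g1 g0 (cond b f1 f0 x) = x := by
  cases b <;> [exact H.hg0; exact H.hg1]

/-- order reflection -/
lemma fb_le_iff (b : Bool) {s t : ℝ} (hs : s ∈ Icc (0:ℝ) 1) (ht : t ∈ Icc (0:ℝ) 1) :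
    cond b f1 f0 s ≤ cond b f1 f0 t ↔ s ≤ t := by
  constructor
  · intro h
    by_contra hlt
    exact absurd (H.fb_mono b ht hs (lt_of_not_ge hlt)) (not_lt.mpr h)
  · intro h
    rcases h.lt_or_eq with h | h
    · exact (H.fb_mono b hs ht h).le
    · simp [h]

lemma fb_lt_iff (b : Bool) {s t : ℝ} (hs : s ∈ Icc (0:ℝ) 1) (ht : t ∈ Icc (0:ℝ) 1) :
    cond b f1 f0 s < cond b f1 f0 t ↔ s < t := by
  constructor
  · intro h
    by_contra hle
    exact absurd ((H.fb_le_iff b ht hs).mpr (not_lt.mp hle)) (not_le.mpr h)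
  · exact fun h => H.fb_mono b hs ht h

/-- every admissible value has a preimage in `[0,1]` under the correct branch -/
lemma exists_preim (b : Bool) {v : ℝ} (hv : v ∈ Icc (0:ℝ) 1)
    (hT : b = true → q ≤ v) (hF : b = false → v ≤ q) :
    ∃ s ∈ Icc (0:ℝ) 1, cond b f1 f0 s = v ∧ cond b g1 g0 v = s := by
  have : v ∈ cond b f1 f0 '' (Icc 0 1) := by
    cases b
    · have h1 : v ≤ q := hF rfl
      have : v ∈ Icc (f0 0) (f0 1) := ⟨by rw [H.hf00]; exact hv.1, le_of_lt (lt_of_le_of_lt h1 H.hq2)⟩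
      exact intermediate_value_Icc (by norm_num) H.hf0c this
    · have h1 : q ≤ v := hT rfl
      have : v ∈ Icc (f1 0) (f1 1) := ⟨le_of_lt (lt_of_lt_of_le H.hq1 h1), by rw [H.hf11]; exact hv.2⟩
      exact intermediate_value_Icc (by norm_num) H.hf1c this
  obtain ⟨s, hs, hfs⟩ := this
  exact ⟨s, hs, hfs, by rw [← hfs, H.gb_inv b s hs]⟩


/-- plus step -/
lemma Tp_step {x : ℝ} (hx : x ∈ Icc (0:ℝ) 1) :
    ∃ s ∈ Icc (0:ℝ) 1, cond (decide (q ≤ x)) f1 f0 s = x ∧ Tplus g0 g1 q x = s := by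
  by_cases h : q ≤ x
  · obtain ⟨s, hs, hfs, hgs⟩ := H.exists_preim true hx (fun _ => h) (by simp)
    refine ⟨s, hs, by simpa [h] using hfs, ?_⟩
    rw [Tplus, if_neg (not_lt.mpr h)]
    simpa using hgs
  · obtain ⟨s, hs, hfs, hgs⟩ := H.exists_preim false hx (by simp) (fun _ => (not_le.mp h).le)
    refine ⟨s, hs, by simpa [h] using hfs, ?_⟩
    rw [Tplus, if_pos (not_le.mp h)]
    simpa using hgs

lemma Tm_step {x : ℝ} (hx : x ∈ Icc (0:ℝ) 1) :
    ∃ s ∈ Icc (0:ℝ) 1, cond (decide (q < x)) f1 f0 s = x ∧ Tminus g0 g1 q x = s := by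
  by_cases h : q < x
  · obtain ⟨s, hs, hfs, hgs⟩ := H.exists_preim true hx (fun _ => h.le) (by simp)
    refine ⟨s, hs, by simpa [h] using hfs, ?_⟩
    rw [Tminus, if_neg (not_le.mpr h)]
    simpa using hgs
  · obtain ⟨s, hs, hfs, hgs⟩ := H.exists_preim false hx (by simp) (fun _ => not_lt.mp h)
    refine ⟨s, hs, by simpa [h] using hfs, ?_⟩
    rw [Tminus, if_pos (not_lt.mp h)]
    simpa using hgs

lemma Tp_mem {x : ℝ} (hx : x ∈ Icc (0:ℝ) 1) : Tplus g0 g1 q x ∈ Icc (0:ℝ) 1 := by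
  obtain ⟨s, hs, _, hT⟩ := H.Tp_step hx; rw [hT]; exact hs

lemma Tm_mem {x : ℝ} (hx : x ∈ Icc (0:ℝ) 1) : Tminus g0 g1 q x ∈ Icc (0:ℝ) 1 := by
  obtain ⟨s, hs, _, hT⟩ := H.Tm_step hx; rw [hT]; exact hs

lemma Tp_iter_mem {x : ℝ} (hx : x ∈ Icc (0:ℝ) 1) (n : ℕ) : (Tplus g0 g1 q)^[n] x ∈ Icc (0:ℝ) 1 := by
  induction n with
  | zero => exact hx
  | succ n ih => rw [Function.iterate_succ_apply']; exact H.Tp_mem ih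

lemma Tm_iter_mem {x : ℝ} (hx : x ∈ Icc (0:ℝ) 1) (n : ℕ) : (Tminus g0 g1 q)^[n] x ∈ Icc (0:ℝ) 1 := by
  induction n with
  | zero => exact hx
  | succ n ih => rw [Function.iterate_succ_apply']; exact H.Tm_mem ih

end Ctx

/- ### wordMap lemmas (no Ctx needed for congr) -/

lemma wordMap_congr (u0 u1 : ℝ → ℝ) {σ σ' : ℕ → Bool} (k : ℕ) (h : ∀ i ≤ k, σ i = σ' i) (x : ℝ) :
    wordMap u0 u1 σ k x = wordMap u0 u1 σ' k x := by
  induction k generalizing x with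
  | zero => simp [wordMap, h 0 le_rfl]
  | succ k ih =>
    simp only [wordMap]
    rw [h (k+1) le_rfl, ih (fun i hi => h i (hi.trans (Nat.le_succ k)))]

lemma wordMap_shift (u0 u1 : ℝ → ℝ) (σ : ℕ → Bool) (k : ℕ) (x : ℝ) :
    wordMap u0 u1 σ (k+1) x = cond (σ 0) u1 u0 (wordMap u0 u1 (shiftn 1 σ) k x) := by
  induction k generalizing x with
  | zero => simp [wordMap, shiftn]
  | succ k ih =>
    show wordMap u0 u1 σ (k+1) (cond (σ (k+2)) u1 u0 x) = _
    rw [ih]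
    rfl

namespace Ctx

variable {f0 f1 g0 g1 : ℝ → ℝ} {q c : ℝ} (H : Ctx f0 f1 g0 g1 q c)
include H

lemma word_map (σ : ℕ → Bool) (k : ℕ) : MapsTo (wordMap f0 f1 σ k) (Icc 0 1) (Icc 0 1) := by
  induction k with
  | zero => exact H.fb_map (σ 0)
  | succ k ih => exact fun x hx => ih (H.fb_map (σ (k+1)) hx)

lemma word_mono (σ : ℕ → Bool) (k : ℕ) : StrictMonoOn (wordMap f0 f1 σ k) (Icc 0 1) := by
  induction k with
  | zero => exact H.fb_mono (σ 0)
  | succ k ih =>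
    intro x hx y hy hxy
    exact ih (H.fb_map _ hx) (H.fb_map _ hy) (H.fb_mono (σ (k+1)) hx hy hxy)

lemma word_cont (σ : ℕ → Bool) (k : ℕ) : ContinuousOn (wordMap f0 f1 σ k) (Icc 0 1) := by
  induction k with
  | zero => exact H.fb_cont (σ 0)
  | succ k ih =>
    exact ih.comp (H.fb_cont (σ (k+1))) (H.fb_map _)

lemma word_lip (σ : ℕ → Bool) (k : ℕ) {x y : ℝ} (hx : x ∈ Icc (0:ℝ) 1) (hy : y ∈ Icc (0:ℝ) 1) :
    |wordMap f0 f1 σ k x - wordMap f0 f1 σ k y| ≤ c ^ (k+1) * |x - y| := by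
  induction k generalizing x y with
  | zero => simpa [wordMap] using H.fb_lip (σ 0) x hx y hy
  | succ k ih =>
    calc |wordMap f0 f1 σ (k+1) x - wordMap f0 f1 σ (k+1) y|
        ≤ c ^ (k+1) * |cond (σ (k+1)) f1 f0 x - cond (σ (k+1)) f1 f0 y| :=
          ih (H.fb_map _ hx) (H.fb_map _ hy)
      _ ≤ c ^ (k+1) * (c * |x - y|) := by
          exact mul_le_mul_of_nonneg_left (H.fb_lip (σ (k+1)) x hx y hy) (pow_nonneg H.hc0 _)
      _ = c ^ (k+2) * |x - y| := by ring


lemma word_zero_mem (σ : ℕ → Bool) (k : ℕ) : wordMap f0 f1 σ k 0 ∈ Icc (0:ℝ) 1 :=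
  H.word_map σ k (by norm_num)

lemma word_dist (σ : ℕ → Bool) (k : ℕ) :
    dist (wordMap f0 f1 σ k 0) (wordMap f0 f1 σ (k+1) 0) ≤ c * c ^ k := by
  have h0 : (0:ℝ) ∈ Icc (0:ℝ) 1 := by norm_num
  have hz : cond (σ (k+1)) f1 f0 0 ∈ Icc (0:ℝ) 1 := H.fb_map _ h0
  have : wordMap f0 f1 σ (k+1) 0 = wordMap f0 f1 σ k (cond (σ (k+1)) f1 f0 0) := rfl
  rw [this, Real.dist_eq]
  calc |wordMap f0 f1 σ k 0 - wordMap f0 f1 σ k (cond (σ (k+1)) f1 f0 0)|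
      ≤ c ^ (k+1) * |0 - cond (σ (k+1)) f1 f0 0| := H.word_lip σ k h0 hz
    _ ≤ c ^ (k+1) * 1 := by
        apply mul_le_mul_of_nonneg_left _ (pow_nonneg H.hc0 _)
        rw [zero_sub, abs_neg, abs_of_nonneg hz.1]
        exact hz.2
    _ = c * c ^ k := by ring

lemma pi_tendsto (σ : ℕ → Bool) :
    Tendsto (fun k => wordMap f0 f1 σ k 0) atTop (𝓝 (piCode f0 f1 σ)) := by
  have hcs : CauchySeq (fun k => wordMap f0 f1 σ k 0) :=
    cauchySeq_of_le_geometric c c H.hc1 (H.word_dist σ)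
  obtain ⟨l, hl⟩ := cauchySeq_tendsto_of_complete hcs
  rwa [piCode, hl.limUnder_eq]

lemma pi_mem (σ : ℕ → Bool) : piCode f0 f1 σ ∈ Icc (0:ℝ) 1 :=
  isClosed_Icc.mem_of_tendsto (H.pi_tendsto σ) (Eventually.of_forall (H.word_zero_mem σ))

lemma pi_dist (σ : ℕ → Bool) (k : ℕ) :
    dist (wordMap f0 f1 σ k 0) (piCode f0 f1 σ) ≤ c * c ^ k / (1 - c) :=
  dist_le_of_le_geometric_of_tendsto c c H.hc1 (H.word_dist σ) (H.pi_tendsto σ) k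

/-- sequences agreeing up to `m` have close codes -/
lemma pi_agree {σ σ' : ℕ → Bool} (m : ℕ) (h : ∀ i ≤ m, σ i = σ' i) :
    dist (piCode f0 f1 σ) (piCode f0 f1 σ') ≤ 2 * (c * c ^ m / (1 - c)) := by
  have h1 := H.pi_dist σ m
  have h2 := H.pi_dist σ' m
  have h3 : wordMap f0 f1 σ m 0 = wordMap f0 f1 σ' m 0 := wordMap_congr f0 f1 m h 0
  calc dist (piCode f0 f1 σ) (piCode f0 f1 σ')
      ≤ dist (piCode f0 f1 σ) (wordMap f0 f1 σ m 0) + dist (wordMap f0 f1 σ' m 0) (piCode f0 f1 σ') := by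
        rw [h3]; exact dist_triangle _ _ _
    _ ≤ c * c ^ m / (1 - c) + c * c ^ m / (1 - c) := by
        rw [dist_comm (piCode f0 f1 σ)]
        exact add_le_add h1 h2
    _ = 2 * (c * c ^ m / (1 - c)) := by ring

omit H in lemma shiftn_shiftn (n m : ℕ) (σ : ℕ → Bool) : shiftn n (shiftn m σ) = shiftn (n + m) σ := by
  funext k; simp [shiftn, Nat.add_assoc]

omit H in lemma shiftn_zero (σ : ℕ → Bool) : shiftn 0 σ = σ := by funext k; simp [shiftn]

/-- `π σ = f_{σ 0} (π (σ≫1))` -/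
lemma pi_shift (σ : ℕ → Bool) :
    piCode f0 f1 σ = cond (σ 0) f1 f0 (piCode f0 f1 (shiftn 1 σ)) := by
  have h1 : Tendsto (fun k => wordMap f0 f1 σ (k+1) 0) atTop (𝓝 (piCode f0 f1 σ)) :=
    (H.pi_tendsto σ).comp (tendsto_add_atTop_nat 1)
  have h2 : Tendsto (fun k => cond (σ 0) f1 f0 (wordMap f0 f1 (shiftn 1 σ) k 0)) atTop
      (𝓝 (cond (σ 0) f1 f0 (piCode f0 f1 (shiftn 1 σ)))) := by
    have hcw : ContinuousWithinAt (cond (σ 0) f1 f0) (Icc 0 1) (piCode f0 f1 (shiftn 1 σ)) :=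
      (H.fb_cont (σ 0)) _ (H.pi_mem _)
    apply hcw.tendsto.comp
    apply tendsto_nhdsWithin_of_tendsto_nhds_of_eventually_within _ (H.pi_tendsto _)
    exact Eventually.of_forall (H.word_zero_mem _)
  have h3 : (fun k => wordMap f0 f1 σ (k+1) 0) =
      fun k => cond (σ 0) f1 f0 (wordMap f0 f1 (shiftn 1 σ) k 0) := by
    funext k; exact wordMap_shift f0 f1 σ k 0
  rw [h3] at h1
  exact tendsto_nhds_unique h1 h2


omit H in
lemma tauPlus_shift (x : ℝ) (n : ℕ) :
    shiftn n (tauPlus g0 g1 q x) = tauPlus g0 g1 q ((Tplus g0 g1 q)^[n] x) := by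
  funext k
  simp only [shiftn, tauPlus, Function.iterate_add_apply]

omit H in
lemma tauMinus_shift (x : ℝ) (n : ℕ) :
    shiftn n (tauMinus g0 g1 q x) = tauMinus g0 g1 q ((Tminus g0 g1 q)^[n] x) := by
  funext k
  simp only [shiftn, tauMinus, Function.iterate_add_apply]

lemma word_tauPlus (k : ℕ) : ∀ x ∈ Icc (0:ℝ) 1,
    wordMap f0 f1 (tauPlus g0 g1 q x) k ((Tplus g0 g1 q)^[k+1] x) = x := by
  induction k with
  | zero =>
    intro x hx
    obtain ⟨s, hs, hfs, hT⟩ := H.Tp_step hx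
    show cond (tauPlus g0 g1 q x 0) f1 f0 (Tplus g0 g1 q x) = x
    have : tauPlus g0 g1 q x 0 = decide (q ≤ x) := by simp [tauPlus]; congr
    rw [this, hT, hfs]
  | succ k ih =>
    intro x hx
    rw [wordMap_shift, tauPlus_shift x 1]
    have h1 : (Tplus g0 g1 q)^[k+1+1] x = (Tplus g0 g1 q)^[k+1] ((Tplus g0 g1 q)^[1] x) := by
      rw [← Function.iterate_add_apply]
    rw [h1]
    have h2 := ih ((Tplus g0 g1 q)^[1] x) (by simpa using H.Tp_mem hx)
    rw [h2]
    obtain ⟨s, hs, hfs, hT⟩ := H.Tp_step hx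
    have : tauPlus g0 g1 q x 0 = decide (q ≤ x) := by simp [tauPlus]; congr
    rw [this]
    simp only [Function.iterate_one]
    rw [hT, hfs]

lemma word_tauMinus (k : ℕ) : ∀ x ∈ Icc (0:ℝ) 1,
    wordMap f0 f1 (tauMinus g0 g1 q x) k ((Tminus g0 g1 q)^[k+1] x) = x := by
  induction k with
  | zero =>
    intro x hx
    obtain ⟨s, hs, hfs, hT⟩ := H.Tm_step hx
    show cond (tauMinus g0 g1 q x 0) f1 f0 (Tminus g0 g1 q x) = x
    have : tauMinus g0 g1 q x 0 = decide (q < x) := by simp [tauMinus]; congr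
    rw [this, hT, hfs]
  | succ k ih =>
    intro x hx
    rw [wordMap_shift, tauMinus_shift x 1]
    have h1 : (Tminus g0 g1 q)^[k+1+1] x = (Tminus g0 g1 q)^[k+1] ((Tminus g0 g1 q)^[1] x) := by
      rw [← Function.iterate_add_apply]
    rw [h1]
    have h2 := ih ((Tminus g0 g1 q)^[1] x) (by simpa using H.Tm_mem hx)
    rw [h2]
    obtain ⟨s, hs, hfs, hT⟩ := H.Tm_step hx
    have : tauMinus g0 g1 q x 0 = decide (q < x) := by simp [tauMinus]; congr
    rw [this]
    simp only [Function.iterate_one]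
    rw [hT, hfs]

/-- generic: if `wordMap σ k (z k) = x` with `z k ∈ I`, then `π σ = x`. -/
lemma pi_eq_of_word {σ : ℕ → Bool} {x : ℝ} {z : ℕ → ℝ} (hz : ∀ k, z k ∈ Icc (0:ℝ) 1)
    (hw : ∀ k, wordMap f0 f1 σ k (z k) = x) : piCode f0 f1 σ = x := by
  have key : Tendsto (fun k => wordMap f0 f1 σ k 0) atTop (𝓝 x) := by
    rw [tendsto_iff_dist_tendsto_zero]
    have hb : ∀ k, dist (wordMap f0 f1 σ k 0) x ≤ c ^ (k+1) := by
      intro k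
      rw [← hw k, Real.dist_eq]
      calc |wordMap f0 f1 σ k 0 - wordMap f0 f1 σ k (z k)|
          ≤ c ^ (k+1) * |0 - z k| := H.word_lip σ k (by norm_num) (hz k)
        _ ≤ c ^ (k+1) * 1 := by
            apply mul_le_mul_of_nonneg_left _ (pow_nonneg H.hc0 _)
            rw [zero_sub, abs_neg, abs_of_nonneg (hz k).1]
            exact (hz k).2
        _ = c ^ (k+1) := mul_one _
    have hgeo : Tendsto (fun k : ℕ => c ^ (k+1)) atTop (𝓝 0) := by
      have := tendsto_pow_atTop_nhds_zero_of_lt_one H.hc0 H.hc1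
      exact (this.comp (tendsto_add_atTop_nat 1))
    exact squeeze_zero (fun k => dist_nonneg) hb hgeo
  exact tendsto_nhds_unique (H.pi_tendsto σ) key

lemma pi_tauPlus {x : ℝ} (hx : x ∈ Icc (0:ℝ) 1) : piCode f0 f1 (tauPlus g0 g1 q x) = x :=
  H.pi_eq_of_word (fun k => H.Tp_iter_mem hx (k+1)) (fun k => H.word_tauPlus k x hx)

lemma pi_tauMinus {x : ℝ} (hx : x ∈ Icc (0:ℝ) 1) : piCode f0 f1 (tauMinus g0 g1 q x) = x :=
  H.pi_eq_of_word (fun k => H.Tm_iter_mem hx (k+1)) (fun k => H.word_tauMinus k x hx)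

lemma pi_shift_tauPlus {x : ℝ} (hx : x ∈ Icc (0:ℝ) 1) (n : ℕ) :
    piCode f0 f1 (shiftn n (tauPlus g0 g1 q x)) = (Tplus g0 g1 q)^[n] x := by
  rw [tauPlus_shift]
  exact H.pi_tauPlus (H.Tp_iter_mem hx n)

lemma pi_shift_tauMinus {x : ℝ} (hx : x ∈ Icc (0:ℝ) 1) (n : ℕ) :
    piCode f0 f1 (shiftn n (tauMinus g0 g1 q x)) = (Tminus g0 g1 q)^[n] x := by
  rw [tauMinus_shift]
  exact H.pi_tauMinus (H.Tm_iter_mem hx n)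


/-- π of shift obeys the branch recursion. -/
lemma pi_shift_rec (ω : ℕ → Bool) (n : ℕ) :
    piCode f0 f1 (shiftn n ω) = cond (ω n) f1 f0 (piCode f0 f1 (shiftn (n+1) ω)) := by
  have := H.pi_shift (shiftn n ω)
  rw [shiftn_shiftn, Nat.add_comm 1 n] at this
  have h0 : shiftn n ω 0 = ω n := by simp [shiftn]
  rwa [h0] at this

/-- if ω satisfies the strict-plus bit conditions then ω = τ⁺(π ω) -/
lemma mem_plus_of_cond {ω : ℕ → Bool}
    (h : ∀ n, (ω n = true → q ≤ piCode f0 f1 (shiftn n ω)) ∧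
              (ω n = false → piCode f0 f1 (shiftn n ω) < q)) :
    ω ∈ tauPlus g0 g1 q '' (Icc 0 1) := by
  set x := piCode f0 f1 ω with hxdef
  have horb : ∀ n, (Tplus g0 g1 q)^[n] x = piCode f0 f1 (shiftn n ω) := by
    intro n
    induction n with
    | zero => simp [shiftn_zero, hxdef]
    | succ n ih =>
      rw [Function.iterate_succ_apply', ih]
      have hrec := H.pi_shift_rec ω n
      cases hb : ω n with
      | true =>
        have hge : q ≤ piCode f0 f1 (shiftn n ω) := (h n).1 hb
        rw [Tplus, if_neg (not_lt.mpr hge), hrec, hb]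
        exact H.hg1 _ (H.pi_mem _)
      | false =>
        have hlt : piCode f0 f1 (shiftn n ω) < q := (h n).2 hb
        rw [Tplus, if_pos hlt, hrec, hb]
        exact H.hg0 _ (H.pi_mem _)
  refine ⟨x, H.pi_mem ω, ?_⟩
  funext n
  show decide (q ≤ (Tplus g0 g1 q)^[n] x) = ω n
  rw [horb n]
  cases hb : ω n with
  | true => simpa using (h n).1 hb
  | false => simpa using not_le.mpr ((h n).2 hb)

lemma mem_minus_of_cond {ω : ℕ → Bool}
    (h : ∀ n, (ω n = true → q < piCode f0 f1 (shiftn n ω)) ∧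
              (ω n = false → piCode f0 f1 (shiftn n ω) ≤ q)) :
    ω ∈ tauMinus g0 g1 q '' (Icc 0 1) := by
  set x := piCode f0 f1 ω with hxdef
  have horb : ∀ n, (Tminus g0 g1 q)^[n] x = piCode f0 f1 (shiftn n ω) := by
    intro n
    induction n with
    | zero => simp [shiftn_zero, hxdef]
    | succ n ih =>
      rw [Function.iterate_succ_apply', ih]
      have hrec := H.pi_shift_rec ω n
      cases hb : ω n with
      | true =>
        have hgt : q < piCode f0 f1 (shiftn n ω) := (h n).1 hb
        rw [Tminus, if_neg (not_le.mpr hgt), hrec, hb]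
        exact H.hg1 _ (H.pi_mem _)
      | false =>
        have hle : piCode f0 f1 (shiftn n ω) ≤ q := (h n).2 hb
        rw [Tminus, if_pos hle, hrec, hb]
        exact H.hg0 _ (H.pi_mem _)
  refine ⟨x, H.pi_mem ω, ?_⟩
  funext n
  show decide (q < (Tminus g0 g1 q)^[n] x) = ω n
  rw [horb n]
  cases hb : ω n with
  | true => simpa using (h n).1 hb
  | false => simpa using not_lt.mpr ((h n).2 hb)


end Ctx

section cylinder

lemma closure_approx {s : Set (ℕ → Bool)} {ω : ℕ → Bool} (h : ω ∈ closure s) (N : ℕ) :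
    ∃ σ ∈ s, ∀ n ≤ N, σ n = ω n := by
  have hU : IsOpen {σ : ℕ → Bool | ∀ n ∈ Finset.range (N+1), σ n ∈ ({ω n} : Set Bool)} := by
    exact isOpen_set_pi (Finset.range (N+1)).finite_toSet (fun a _ => isOpen_discrete _)
  have hmem : ω ∈ {σ : ℕ → Bool | ∀ n ∈ Finset.range (N+1), σ n ∈ ({ω n} : Set Bool)} := by
    intro n _; rfl
  obtain ⟨σ, hσU, hσs⟩ := mem_closure_iff.mp h _ hU hmem
  exact ⟨σ, hσs, fun n hn => hσU n (Finset.mem_range.mpr (Nat.lt_succ_of_le hn))⟩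

lemma mem_closure_of_approx {s : Set (ℕ → Bool)} {ω : ℕ → Bool}
    (h : ∀ N, ∃ σ ∈ s, ∀ n ≤ N, σ n = ω n) : ω ∈ closure s := by
  rw [mem_closure_iff]
  intro o ho hωo
  obtain ⟨F, u, h1, h2⟩ := isOpen_pi_iff.mp ho ω hωo
  obtain ⟨σ, hσs, hσ⟩ := h (F.sup id)
  refine ⟨σ, h2 ?_, hσs⟩
  intro a ha
  rw [hσ a (Finset.le_sup (f := id) ha)]
  exact (h1 a ha).2

end cylinder

namespace Ctx

variable {f0 f1 g0 g1 : ℝ → ℝ} {q c : ℝ} (H : Ctx f0 f1 g0 g1 q c)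
include H

omit H in
/-- monotone comparison chain along a common word -/
lemma chain (r : ℝ → ℝ → Prop)
    (hr : ∀ (b : Bool) (s t : ℝ), s ∈ Icc (0:ℝ) 1 → t ∈ Icc (0:ℝ) 1 →
      r (cond b f1 f0 s) (cond b f1 f0 t) → r s t)
    (ω : ℕ → Bool) (p v : ℕ → ℝ) (m n : ℕ) (hmn : m ≤ n)
    (hp : ∀ j, m ≤ j → j < n → p (j+1) ∈ Icc (0:ℝ) 1 ∧ cond (ω j) f1 f0 (p (j+1)) = p j)
    (hv : ∀ j, m ≤ j → j < n → v (j+1) ∈ Icc (0:ℝ) 1 ∧ cond (ω j) f1 f0 (v (j+1)) = v j)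
    (hbase : r (p m) (v m)) : r (p n) (v n) := by
  induction n, hmn using Nat.le_induction with
  | base => exact hbase
  | succ n hmn ih =>
    have h1 := hp n hmn (Nat.lt_succ_self n)
    have h2 := hv n hmn (Nat.lt_succ_self n)
    have hrn : r (p n) (v n) :=
      ih (fun j hj hjn => hp j hj (hjn.trans (Nat.lt_succ_self n)))
         (fun j hj hjn => hv j hj (hjn.trans (Nat.lt_succ_self n)))
    apply hr (ω n) _ _ h1.1 h2.1
    rw [h1.2, h2.2]
    exact hrn

lemma hr_le : ∀ (b : Bool) (s t : ℝ), s ∈ Icc (0:ℝ) 1 → t ∈ Icc (0:ℝ) 1 →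
    (cond b f1 f0 s ≤ cond b f1 f0 t) → s ≤ t := fun b s t hs ht h => (H.fb_le_iff b hs ht).mp h

lemma hr_lt : ∀ (b : Bool) (s t : ℝ), s ∈ Icc (0:ℝ) 1 → t ∈ Icc (0:ℝ) 1 →
    (cond b f1 f0 s < cond b f1 f0 t) → s < t := fun b s t hs ht h => (H.fb_lt_iff b hs ht).mp h

lemma hr_ge : ∀ (b : Bool) (s t : ℝ), s ∈ Icc (0:ℝ) 1 → t ∈ Icc (0:ℝ) 1 →
    (cond b f1 f0 t ≤ cond b f1 f0 s) → t ≤ s := fun b s t hs ht h => (H.fb_le_iff b ht hs).mp h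

lemma hr_gt : ∀ (b : Bool) (s t : ℝ), s ∈ Icc (0:ℝ) 1 → t ∈ Icc (0:ℝ) 1 →
    (cond b f1 f0 t < cond b f1 f0 s) → t < s := fun b s t hs ht h => (H.fb_lt_iff b ht hs).mp h


/-- limit of the orbit values of approximants -/
lemma approx_tendsto {ω : ℕ → Bool} {y : ℕ → ℝ} (hyI : ∀ N, y N ∈ Icc (0:ℝ) 1)
    (T : ℝ → ℝ) (τ : ℝ → ℕ → Bool) (n : ℕ)
    (hpi : ∀ N (k : ℕ), piCode f0 f1 (shiftn k (τ (y N))) = T^[k] (y N))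
    (hagree : ∀ N, ∀ i ≤ N + n, τ (y N) i = ω i) :
    Tendsto (fun N => T^[n] (y N)) atTop (𝓝 (piCode f0 f1 (shiftn n ω))) := by
  rw [tendsto_iff_dist_tendsto_zero]
  have hb : ∀ N, dist (T^[n] (y N)) (piCode f0 f1 (shiftn n ω)) ≤ 2 * (c * c ^ N / (1 - c)) := by
    intro N
    rw [← hpi N n]
    apply H.pi_agree N
    intro i hi
    simp only [shiftn]
    exact hagree N (i + n) (by omega)
  have hgeo : Tendsto (fun N : ℕ => 2 * (c * c ^ N / (1 - c))) atTop (𝓝 0) := by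
    have h1 : Tendsto (fun N : ℕ => c ^ N) atTop (𝓝 0) :=
      tendsto_pow_atTop_nhds_zero_of_lt_one H.hc0 H.hc1
    have : Tendsto (fun N : ℕ => 2 * (c * c ^ N / (1 - c))) atTop (𝓝 (2 * (c * 0 / (1 - c)))) := by
      apply Tendsto.const_mul
      exact (h1.const_mul c).div_const _
    simpa using this
  exact squeeze_zero (fun N => dist_nonneg) hb hgeo

lemma closure_cond_plus {ω : ℕ → Bool}
    (hcl : ω ∈ closure (tauPlus g0 g1 q '' (Icc 0 1))) (n : ℕ) :
    (ω n = true → q ≤ piCode f0 f1 (shiftn n ω)) ∧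
    (ω n = false → piCode f0 f1 (shiftn n ω) ≤ q) := by
  have h := fun N => closure_approx hcl (N + n)
  choose σ hσmem hσagree using h
  choose y hyI hyτ using hσmem
  have hagree : ∀ N, ∀ i ≤ N + n, tauPlus g0 g1 q (y N) i = ω i := by
    intro N i hi; rw [hyτ N]; exact hσagree N i hi
  have hlim := H.approx_tendsto hyI (Tplus g0 g1 q) (tauPlus g0 g1 q)
    n (fun N k => H.pi_shift_tauPlus (hyI N) k) hagree
  have hbit : ∀ N, decide (q ≤ (Tplus g0 g1 q)^[n] (y N)) = ω n := by
    intro N; exact hagree N n (by omega)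
  constructor
  · intro hb
    apply ge_of_tendsto' hlim
    intro N
    have := hbit N; rw [hb] at this; simpa using this
  · intro hb
    apply le_of_tendsto' hlim
    intro N
    have := hbit N; rw [hb] at this
    simpa using le_of_lt (by simpa using this : (Tplus g0 g1 q)^[n] (y N) < q)

lemma closure_cond_minus {ω : ℕ → Bool}
    (hcl : ω ∈ closure (tauMinus g0 g1 q '' (Icc 0 1))) (n : ℕ) :
    (ω n = true → q ≤ piCode f0 f1 (shiftn n ω)) ∧
    (ω n = false → piCode f0 f1 (shiftn n ω) ≤ q) := by
  have h := fun N => closure_approx hcl (N + n)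
  choose σ hσmem hσagree using h
  choose y hyI hyτ using hσmem
  have hagree : ∀ N, ∀ i ≤ N + n, tauMinus g0 g1 q (y N) i = ω i := by
    intro N i hi; rw [hyτ N]; exact hσagree N i hi
  have hlim := H.approx_tendsto hyI (Tminus g0 g1 q) (tauMinus g0 g1 q)
    n (fun N k => H.pi_shift_tauMinus (hyI N) k) hagree
  have hbit : ∀ N, decide (q < (Tminus g0 g1 q)^[n] (y N)) = ω n := by
    intro N; exact hagree N n (by omega)
  constructor
  · intro hb
    apply ge_of_tendsto' hlim
    intro N
    have := hbit N; rw [hb] at this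
    exact le_of_lt (by simpa using this)
  · intro hb
    apply le_of_tendsto' hlim
    intro N
    have := hbit N; rw [hb] at this
    simpa using this


/-- extraction of exceptional indices -/
lemma not_mem_plus_extract {ω : ℕ → Bool}
    (hcond : ∀ n, (ω n = true → q ≤ piCode f0 f1 (shiftn n ω)) ∧
      (ω n = false → piCode f0 f1 (shiftn n ω) ≤ q))
    (hnot : ω ∉ tauPlus g0 g1 q '' (Icc 0 1)) :
    ∃ n, ω n = false ∧ piCode f0 f1 (shiftn n ω) = q := by
  have h1 : ¬ (∀ n, (ω n = true → q ≤ piCode f0 f1 (shiftn n ω)) ∧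
      (ω n = false → piCode f0 f1 (shiftn n ω) < q)) :=
    fun hh => hnot (H.mem_plus_of_cond hh)
  obtain ⟨n, hn⟩ := not_forall.mp h1
  refine ⟨n, ?_⟩
  cases hb : ω n with
  | true => exact absurd ⟨(hcond n).1, by simp [hb]⟩ hn
  | false =>
    refine ⟨rfl, le_antisymm ((hcond n).2 hb) ?_⟩
    by_contra hlt
    exact hn ⟨by simp [hb], fun _ => lt_of_not_ge hlt⟩

lemma not_mem_minus_extract {ω : ℕ → Bool}
    (hcond : ∀ n, (ω n = true → q ≤ piCode f0 f1 (shiftn n ω)) ∧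
      (ω n = false → piCode f0 f1 (shiftn n ω) ≤ q))
    (hnot : ω ∉ tauMinus g0 g1 q '' (Icc 0 1)) :
    ∃ m, ω m = true ∧ piCode f0 f1 (shiftn m ω) = q := by
  have h1 : ¬ (∀ n, (ω n = true → q < piCode f0 f1 (shiftn n ω)) ∧
      (ω n = false → piCode f0 f1 (shiftn n ω) ≤ q)) :=
    fun hh => hnot (H.mem_minus_of_cond hh)
  obtain ⟨m, hm⟩ := not_forall.mp h1
  refine ⟨m, ?_⟩
  cases hb : ω m with
  | false => exact absurd ⟨by simp [hb], fun _ => (hcond m).2 hb⟩ hm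
  | true =>
    refine ⟨rfl, le_antisymm ?_ ((hcond m).1 hb)⟩
    by_contra hlt
    exact hm ⟨fun _ => lt_of_not_ge hlt, by simp [hb]⟩

lemma p_steps (ω : ℕ → Bool) :
    ∀ j : ℕ, piCode f0 f1 (shiftn (j+1) ω) ∈ Icc (0:ℝ) 1 ∧
      cond (ω j) f1 f0 (piCode f0 f1 (shiftn (j+1) ω)) = piCode f0 f1 (shiftn j ω) :=
  fun j => ⟨H.pi_mem _, (H.pi_shift_rec ω j).symm⟩

lemma closure_plus_subset :
    closure (tauPlus g0 g1 q '' (Icc 0 1)) ⊆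
      tauPlus g0 g1 q '' (Icc 0 1) ∪ tauMinus g0 g1 q '' (Icc 0 1) := by
  intro ω hcl
  by_contra hmem
  rw [Set.mem_union] at hmem
  push_neg at hmem
  have hcond := H.closure_cond_plus hcl
  obtain ⟨n, hnb, hnq⟩ := H.not_mem_plus_extract hcond hmem.1
  obtain ⟨m, hmb, hmq⟩ := H.not_mem_minus_extract hcond hmem.2
  set p : ℕ → ℝ := fun j => piCode f0 f1 (shiftn j ω) with hp
  have hpn : p n = q := hnq
  have hpm : p m = q := hmq
  obtain ⟨σ, hσmem, hσag⟩ := closure_approx hcl (max n m)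
  obtain ⟨y, hyI, hyτ⟩ := hσmem
  have hbit : ∀ j ≤ max n m, decide (q ≤ (Tplus g0 g1 q)^[j] y) = ω j := by
    intro j hj
    have : tauPlus g0 g1 q y j = ω j := by rw [hyτ]; exact hσag j hj
    exact this
  set v : ℕ → ℝ := fun j => (Tplus g0 g1 q)^[j] y with hv
  have hvsteps : ∀ j, j < max n m → v (j+1) ∈ Icc (0:ℝ) 1 ∧
      cond (ω j) f1 f0 (v (j+1)) = v j := by
    intro j hj
    obtain ⟨s, hs, hfs, hT⟩ := H.Tp_step (H.Tp_iter_mem hyI j)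
    have hb : decide (q ≤ v j) = ω j := hbit j hj.le
    have hv1 : v (j+1) = s := by rw [hv]; simp only [Function.iterate_succ_apply']; exact hT
    rw [hv1]
    exact ⟨hs, by rw [← hb]; exact hfs⟩
  have hvm : q ≤ v m := by
    have hb := hbit m (le_max_right n m); rw [hmb] at hb
    exact of_decide_eq_true hb
  have hvn : v n < q := by
    have hb := hbit n (le_max_left n m); rw [hnb] at hb
    exact not_le.mp (of_decide_eq_false hb)
  rcases lt_trichotomy n m with hlt | heq | hgt
  · -- n < m : strict chain v < p from n to m
    have hch := chain (fun a b => b < a) H.hr_gt ω p v n m hlt.le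
      (fun j _ _ => H.p_steps ω j)
      (fun j _ hj => hvsteps j (lt_of_lt_of_le hj (le_max_right n m)))
      (by rw [hpn]; exact hvn)
    rw [hpm] at hch
    exact absurd hvm (not_le.mpr hch)
  · rw [heq, hmb] at hnb; exact Bool.noConfusion hnb
  · -- m < n : chain p ≤ v from m to n
    have hch := chain (fun a b => a ≤ b) H.hr_le ω p v m n hgt.le
      (fun j _ _ => H.p_steps ω j)
      (fun j _ hj => hvsteps j (lt_of_lt_of_le hj (le_max_left n m)))
      (by rw [hpm]; exact hvm)
    rw [hpn] at hch
    exact absurd hvn (not_lt.mpr hch)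

lemma closure_minus_subset :
    closure (tauMinus g0 g1 q '' (Icc 0 1)) ⊆
      tauPlus g0 g1 q '' (Icc 0 1) ∪ tauMinus g0 g1 q '' (Icc 0 1) := by
  intro ω hcl
  by_contra hmem
  rw [Set.mem_union] at hmem
  push_neg at hmem
  have hcond := H.closure_cond_minus hcl
  obtain ⟨n, hnb, hnq⟩ := H.not_mem_plus_extract hcond hmem.1
  obtain ⟨m, hmb, hmq⟩ := H.not_mem_minus_extract hcond hmem.2
  set p : ℕ → ℝ := fun j => piCode f0 f1 (shiftn j ω) with hp
  have hpn : p n = q := hnq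
  have hpm : p m = q := hmq
  obtain ⟨σ, hσmem, hσag⟩ := closure_approx hcl (max n m)
  obtain ⟨y, hyI, hyτ⟩ := hσmem
  have hbit : ∀ j ≤ max n m, decide (q < (Tminus g0 g1 q)^[j] y) = ω j := by
    intro j hj
    have : tauMinus g0 g1 q y j = ω j := by rw [hyτ]; exact hσag j hj
    exact this
  set v : ℕ → ℝ := fun j => (Tminus g0 g1 q)^[j] y with hv
  have hvsteps : ∀ j, j < max n m → v (j+1) ∈ Icc (0:ℝ) 1 ∧
      cond (ω j) f1 f0 (v (j+1)) = v j := by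
    intro j hj
    obtain ⟨s, hs, hfs, hT⟩ := H.Tm_step (H.Tm_iter_mem hyI j)
    have hb : decide (q < v j) = ω j := hbit j hj.le
    have hv1 : v (j+1) = s := by rw [hv]; simp only [Function.iterate_succ_apply']; exact hT
    rw [hv1]
    exact ⟨hs, by rw [← hb]; exact hfs⟩
  have hvm : q < v m := by
    have hb := hbit m (le_max_right n m); rw [hmb] at hb
    exact of_decide_eq_true hb
  have hvn : v n ≤ q := by
    have hb := hbit n (le_max_left n m); rw [hnb] at hb
    exact not_lt.mp (of_decide_eq_false hb)
  rcases lt_trichotomy n m with hlt | heq | hgt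
  · -- n < m : chain v ≤ p from n to m
    have hch := chain (fun a b => b ≤ a) H.hr_ge ω p v n m hlt.le
      (fun j _ _ => H.p_steps ω j)
      (fun j _ hj => hvsteps j (lt_of_lt_of_le hj (le_max_right n m)))
      (by rw [hpn]; exact hvn)
    rw [hpm] at hch
    exact absurd hvm (not_lt.mpr hch)
  · rw [heq, hmb] at hnb; exact Bool.noConfusion hnb
  · -- m < n : strict chain p < v from m to n
    have hch := chain (fun a b => a < b) H.hr_lt ω p v m n hgt.le
      (fun j _ _ => H.p_steps ω j)
      (fun j _ hj => hvsteps j (lt_of_lt_of_le hj (le_max_left n m)))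
      (by rw [hpm]; exact hvm)
    rw [hpn] at hch
    exact absurd hvn (not_le.mpr hch)


omit H in
lemma shiftn_apply (b : ℕ → Bool) (j k : ℕ) : shiftn j b k = b (k + j) := rfl

omit H in
lemma w_rec (b : ℕ → Bool) (N j : ℕ) (hj : j < N) (t : ℝ) :
    wordMap f0 f1 (shiftn j b) (N - j) t = cond (b j) f1 f0 (wordMap f0 f1 (shiftn (j+1) b) (N - (j+1)) t) := by
  have h1 : N - j = (N - (j+1)) + 1 := by omega
  rw [h1, wordMap_shift]
  have h2 : shiftn 1 (shiftn j b) = shiftn (j+1) b := by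
    rw [shiftn_shiftn, Nat.add_comm]
  rw [h2, shiftn_apply, Nat.zero_add]

omit H in
lemma w_base (b : ℕ → Bool) (N : ℕ) (t : ℝ) :
    wordMap f0 f1 (shiftn N b) (N - N) t = cond (b N) f1 f0 t := by
  rw [Nat.sub_self]
  show cond (shiftn N b 0) f1 f0 t = _
  rw [shiftn_apply, Nat.zero_add]

omit H in
lemma w_eval (b : ℕ → Bool) (u : ℕ → ℝ) (N : ℕ)
    (hstep : ∀ j, cond (b j) f1 f0 (u (j+1)) = u j) :
    ∀ j ≤ N, wordMap f0 f1 (shiftn j b) (N - j) (u (N+1)) = u j := by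
  suffices h : ∀ d j, j + d = N → wordMap f0 f1 (shiftn j b) (N - j) (u (N+1)) = u j by
    intro j hj; exact h (N - j) j (by omega)
  intro d
  induction d with
  | zero =>
    intro j hj
    have hjN : j = N := by omega
    subst hjN
    rw [w_base]
    exact hstep _
  | succ d ih =>
    intro j hj
    rw [w_rec _ _ _ (by omega), ih (j+1) (by omega), hstep j]

/-- orbit of 0 under Tplus -/
lemma Tp_zero (n : ℕ) : (Tplus g0 g1 q)^[n] 0 = 0 := by
  induction n with
  | zero => rfl
  | succ n ih =>
    rw [Function.iterate_succ_apply', ih, Tplus, if_pos H.hq0]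
    have := H.hg0 0 (by norm_num)
    rwa [H.hf00] at this

/-- orbit of 1 under Tminus -/
lemma Tm_one (n : ℕ) : (Tminus g0 g1 q)^[n] 1 = 1 := by
  induction n with
  | zero => rfl
  | succ n ih =>
    rw [Function.iterate_succ_apply', ih, Tminus, if_neg (not_le.mpr H.hqlt1)]
    have := H.hg1 1 (by norm_num)
    rwa [H.hf11] at this

/-- minus itineraries are approximated by plus itineraries -/
lemma approx_plus_of_minus {x : ℝ} (hx : x ∈ Icc (0:ℝ) 1) (N : ℕ) :
    ∃ y ∈ Icc (0:ℝ) 1, ∀ n ≤ N, tauPlus g0 g1 q y n = tauMinus g0 g1 q x n := by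
  set u : ℕ → ℝ := fun j => (Tminus g0 g1 q)^[j] x with hu
  set b : ℕ → Bool := tauMinus g0 g1 q x with hb
  have huI : ∀ j, u j ∈ Icc (0:ℝ) 1 := fun j => H.Tm_iter_mem hx j
  have hbit : ∀ j, b j = decide (q < u j) := fun j => rfl
  have hstep : ∀ j, cond (b j) f1 f0 (u (j+1)) = u j := by
    intro j
    obtain ⟨s, hs, hfs, hT⟩ := H.Tm_step (huI j)
    have hu1 : u (j+1) = s := by rw [hu]; simp only [Function.iterate_succ_apply']; exact hT
    rw [hu1, hbit]; exact hfs
  by_cases hcase : u (N+1) = 0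
  · -- degenerate : x = 0
    have hzero : ∀ d j, j + d = N + 1 → u j = 0 := by
      intro d
      induction d with
      | zero =>
        intro j hj
        have hjN : j = N + 1 := by omega
        rwa [hjN]
      | succ d ih =>
        intro j hj
        have h1 : u (j+1) = 0 := ih (j+1) (by omega)
        have h2 := hstep j
        rw [h1] at h2
        cases hbj : b j with
        | true =>
          rw [hbj] at h2
          have : u j = f1 0 := h2.symm
          have hq : q < u j := of_decide_eq_true (by rw [← hbit]; exact hbj)
          rw [this] at hq
          exact absurd hq (not_lt.mpr H.hq1.le)
        | false =>
          rw [hbj] at h2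
          simp only [Bool.cond_false] at h2
          rw [← h2, H.hf00]
    have hx0 : x = 0 := hzero (N+1) 0 (by omega)
    refine ⟨0, by norm_num, ?_⟩
    intro n hn
    have h1 : tauPlus g0 g1 q 0 n = false := by
      show decide (q ≤ (Tplus g0 g1 q)^[n] 0) = false
      rw [H.Tp_zero]
      simp [not_le.mpr H.hq0]
    have h2 : tauMinus g0 g1 q x n = false := by
      show decide (q < u n) = false
      rw [hzero (N + 1 - n) n (by omega)]
      simp [not_lt.mpr H.hq0.le]
    rw [h1, hb, h2]
  · -- main case : pick t slightly below u (N+1)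
    have hupos : 0 < u (N+1) := lt_of_le_of_ne (huI (N+1)).1 (Ne.symm hcase)
    set u' := u (N+1) with hu'
    have hsub : Ico (0:ℝ) u' ⊆ Icc 0 1 := fun t ht => ⟨ht.1, le_trans ht.2.le (huI (N+1)).2⟩
    have hNB : (𝓝[Ico (0:ℝ) u'] u').NeBot := by
      rw [← mem_closure_iff_nhdsWithin_neBot, closure_Ico (ne_of_lt hupos)]
      exact ⟨hupos.le, le_rfl⟩
    have hev : ∀ᶠ t in 𝓝[Ico (0:ℝ) u'] u',
        t ∈ Ico (0:ℝ) u' ∧ ∀ j ∈ Finset.range (N+1), q < u j →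
          q < wordMap f0 f1 (shiftn j b) (N - j) t := by
      refine Filter.Eventually.and self_mem_nhdsWithin ?_
      rw [eventually_all_finset]
      intro j hj
      rcases le_or_gt (u j) q with h | h
      · exact Eventually.of_forall (fun t ht => absurd ht (not_lt.mpr h))
      · have hjN : j ≤ N := by have := Finset.mem_range.mp hj; omega
        have hcw : ContinuousWithinAt (wordMap f0 f1 (shiftn j b) (N - j)) (Ico (0:ℝ) u') u' :=
          ((H.word_cont (shiftn j b) (N - j)) u' (huI (N+1))).mono hsub
        have heval : wordMap f0 f1 (shiftn j b) (N - j) u' = u j :=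
          w_eval b u N hstep j hjN
        have : ∀ᶠ z in 𝓝 (u j), q < z := lt_mem_nhds h
        have h2 := hcw.tendsto
        rw [heval] at h2
        exact (h2.eventually this).mono (fun t ht _ => ht)
    obtain ⟨t, ht, hcond⟩ := hev.exists
    have htI : t ∈ Icc (0:ℝ) 1 := hsub ht
    have htlt : t < u' := ht.2
    set w : ℕ → ℝ := fun j => wordMap f0 f1 (shiftn j b) (N - j) t with hw
    have hwI : ∀ j, w j ∈ Icc (0:ℝ) 1 := fun j => H.word_map _ _ htI
    have hwlt : ∀ j ≤ N, b j = false → w j < q := by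
      intro j hj hbj
      have h1 : w j < u j := by
        rw [hw]
        have := H.word_mono (shiftn j b) (N - j) htI (huI (N+1)) htlt
        rwa [w_eval b u N hstep j hj] at this
      have h2 : ¬ q < u j := of_decide_eq_false (by rw [← hbit]; exact hbj)
      exact lt_of_lt_of_le h1 (not_lt.mp h2)
    have hwgt : ∀ j ≤ N, b j = true → q < w j := by
      intro j hj hbj
      have h2 : q < u j := of_decide_eq_true (by rw [← hbit]; exact hbj)
      exact hcond j (Finset.mem_range.mpr (by omega)) h2
    have horb : ∀ n ≤ N, (Tplus g0 g1 q)^[n] (w 0) = w n := by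
      intro n hn
      induction n with
      | zero => rfl
      | succ n ih =>
        have hnN : n ≤ N := by omega
        rw [Function.iterate_succ_apply', ih hnN]
        have hrec : w n = cond (b n) f1 f0 (w (n+1)) := w_rec b N n (by omega) t
        cases hbn : b n with
        | true =>
          have hq : q < w n := hwgt n hnN hbn
          rw [Tplus, if_neg (not_lt.mpr hq.le), hrec, hbn]
          exact H.hg1 _ (hwI (n+1))
        | false =>
          have hq : w n < q := hwlt n hnN hbn
          rw [Tplus, if_pos hq, hrec, hbn]
          exact H.hg0 _ (hwI (n+1))
    refine ⟨w 0, hwI 0, ?_⟩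
    intro n hn
    show decide (q ≤ (Tplus g0 g1 q)^[n] (w 0)) = b n
    rw [horb n hn]
    cases hbn : b n with
    | true => simpa using (hwgt n hn hbn).le
    | false => simpa using not_le.mpr (hwlt n hn hbn)

/-- plus itineraries are approximated by minus itineraries -/
lemma approx_minus_of_plus {x : ℝ} (hx : x ∈ Icc (0:ℝ) 1) (N : ℕ) :
    ∃ y ∈ Icc (0:ℝ) 1, ∀ n ≤ N, tauMinus g0 g1 q y n = tauPlus g0 g1 q x n := by
  set u : ℕ → ℝ := fun j => (Tplus g0 g1 q)^[j] x with hu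
  set b : ℕ → Bool := tauPlus g0 g1 q x with hb
  have huI : ∀ j, u j ∈ Icc (0:ℝ) 1 := fun j => H.Tp_iter_mem hx j
  have hbit : ∀ j, b j = decide (q ≤ u j) := fun j => rfl
  have hstep : ∀ j, cond (b j) f1 f0 (u (j+1)) = u j := by
    intro j
    obtain ⟨s, hs, hfs, hT⟩ := H.Tp_step (huI j)
    have hu1 : u (j+1) = s := by rw [hu]; simp only [Function.iterate_succ_apply']; exact hT
    rw [hu1, hbit]; exact hfs
  by_cases hcase : u (N+1) = 1
  · -- degenerate : x = 1
    have hone : ∀ d j, j + d = N + 1 → u j = 1 := by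
      intro d
      induction d with
      | zero =>
        intro j hj
        have hjN : j = N + 1 := by omega
        rwa [hjN]
      | succ d ih =>
        intro j hj
        have h1 : u (j+1) = 1 := ih (j+1) (by omega)
        have h2 := hstep j
        rw [h1] at h2
        cases hbj : b j with
        | false =>
          rw [hbj] at h2
          simp only [Bool.cond_false] at h2
          have : u j = f0 1 := h2.symm
          have hq : ¬ q ≤ u j := of_decide_eq_false (by rw [← hbit]; exact hbj)
          rw [this] at hq
          exact absurd H.hq2.le hq
        | true =>
          rw [hbj] at h2
          simp only [Bool.cond_true] at h2
          rw [← h2, H.hf11]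
    have hx1 : x = 1 := hone (N+1) 0 (by omega)
    refine ⟨1, by norm_num, ?_⟩
    intro n hn
    have h1 : tauMinus g0 g1 q 1 n = true := by
      show decide (q < (Tminus g0 g1 q)^[n] 1) = true
      rw [H.Tm_one]
      simp [H.hqlt1]
    have h2 : tauPlus g0 g1 q x n = true := by
      show decide (q ≤ u n) = true
      rw [hone (N + 1 - n) n (by omega)]
      simp [H.hqlt1.le]
    rw [h1, hb, h2]
  · -- main case : pick t slightly above u (N+1)
    have hult : u (N+1) < 1 := lt_of_le_of_ne (huI (N+1)).2 hcase
    set u' := u (N+1) with hu'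
    have hsub : Ioc u' (1:ℝ) ⊆ Icc 0 1 := fun t ht => ⟨le_trans (huI (N+1)).1 ht.1.le, ht.2⟩
    have hNB : (𝓝[Ioc u' (1:ℝ)] u').NeBot := by
      rw [← mem_closure_iff_nhdsWithin_neBot, closure_Ioc (ne_of_lt hult)]
      exact ⟨le_rfl, hult.le⟩
    have hev : ∀ᶠ t in 𝓝[Ioc u' (1:ℝ)] u',
        t ∈ Ioc u' (1:ℝ) ∧ ∀ j ∈ Finset.range (N+1), u j < q →
          wordMap f0 f1 (shiftn j b) (N - j) t < q := by
      refine Filter.Eventually.and self_mem_nhdsWithin ?_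
      rw [eventually_all_finset]
      intro j hj
      rcases le_or_gt q (u j) with h | h
      · exact Eventually.of_forall (fun t ht => absurd ht (not_lt.mpr h))
      · have hjN : j ≤ N := by have := Finset.mem_range.mp hj; omega
        have hcw : ContinuousWithinAt (wordMap f0 f1 (shiftn j b) (N - j)) (Ioc u' (1:ℝ)) u' :=
          ((H.word_cont (shiftn j b) (N - j)) u' (huI (N+1))).mono hsub
        have heval : wordMap f0 f1 (shiftn j b) (N - j) u' = u j :=
          w_eval b u N hstep j hjN
        have : ∀ᶠ z in 𝓝 (u j), z < q := gt_mem_nhds h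
        have h2 := hcw.tendsto
        rw [heval] at h2
        exact (h2.eventually this).mono (fun t ht _ => ht)
    obtain ⟨t, ht, hcond⟩ := hev.exists
    have htI : t ∈ Icc (0:ℝ) 1 := hsub ht
    have htgt : u' < t := ht.1
    set w : ℕ → ℝ := fun j => wordMap f0 f1 (shiftn j b) (N - j) t with hw
    have hwI : ∀ j, w j ∈ Icc (0:ℝ) 1 := fun j => H.word_map _ _ htI
    have hwgt : ∀ j ≤ N, b j = true → q < w j := by
      intro j hj hbj
      have h1 : u j < w j := by
        rw [hw]
        have := H.word_mono (shiftn j b) (N - j) (huI (N+1)) htI htgt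
        rwa [w_eval b u N hstep j hj] at this
      have h2 : q ≤ u j := of_decide_eq_true (by rw [← hbit]; exact hbj)
      exact lt_of_le_of_lt h2 h1
    have hwlt : ∀ j ≤ N, b j = false → w j < q := by
      intro j hj hbj
      have h2 : ¬ q ≤ u j := of_decide_eq_false (by rw [← hbit]; exact hbj)
      exact hcond j (Finset.mem_range.mpr (by omega)) (not_le.mp h2)
    have horb : ∀ n ≤ N, (Tminus g0 g1 q)^[n] (w 0) = w n := by
      intro n hn
      induction n with
      | zero => rfl
      | succ n ih =>
        have hnN : n ≤ N := by omega
        rw [Function.iterate_succ_apply', ih hnN]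
        have hrec : w n = cond (b n) f1 f0 (w (n+1)) := w_rec b N n (by omega) t
        cases hbn : b n with
        | true =>
          have hq : q < w n := hwgt n hnN hbn
          rw [Tminus, if_neg (not_le.mpr hq), hrec, hbn]
          exact H.hg1 _ (hwI (n+1))
        | false =>
          have hq : w n < q := hwlt n hnN hbn
          rw [Tminus, if_pos hq.le, hrec, hbn]
          exact H.hg0 _ (hwI (n+1))
    refine ⟨w 0, hwI 0, ?_⟩
    intro n hn
    show decide (q < (Tminus g0 g1 q)^[n] (w 0)) = b n
    rw [horb n hn]
    cases hbn : b n with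
    | true => simpa using hwgt n hn hbn
    | false => simpa using not_lt.mpr (hwlt n hn hbn).le


lemma minus_subset_closure_plus :
    tauMinus g0 g1 q '' (Icc 0 1) ⊆ closure (tauPlus g0 g1 q '' (Icc 0 1)) := by
  rintro ω ⟨x, hx, rfl⟩
  apply mem_closure_of_approx
  intro N
  obtain ⟨y, hy, hagree⟩ := H.approx_plus_of_minus hx N
  exact ⟨tauPlus g0 g1 q y, ⟨y, hy, rfl⟩, hagree⟩

lemma plus_subset_closure_minus :
    tauPlus g0 g1 q '' (Icc 0 1) ⊆ closure (tauMinus g0 g1 q '' (Icc 0 1)) := by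
  rintro ω ⟨x, hx, rfl⟩
  apply mem_closure_of_approx
  intro N
  obtain ⟨y, hy, hagree⟩ := H.approx_minus_of_plus hx N
  exact ⟨tauMinus g0 g1 q y, ⟨y, hy, rfl⟩, hagree⟩

lemma main :
    closure (tauPlus g0 g1 q '' (Icc 0 1)) =
      tauPlus g0 g1 q '' (Icc 0 1) ∪ tauMinus g0 g1 q '' (Icc 0 1) ∧
    closure (tauMinus g0 g1 q '' (Icc 0 1)) =
      tauPlus g0 g1 q '' (Icc 0 1) ∪ tauMinus g0 g1 q '' (Icc 0 1) := by
  constructor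
  · apply Subset.antisymm H.closure_plus_subset
    exact Set.union_subset subset_closure H.minus_subset_closure_plus
  · apply Subset.antisymm H.closure_minus_subset
    exact Set.union_subset H.plus_subset_closure_minus subset_closure

end Ctx


/-- `Ω̄_q = Ω_q^+ ∪ Ω_q^-` is the closure of each of `Ω_q^+`, `Ω_q^-` in the
product topology on `{0,1}^∞`. -/
theorem stmt7
    (f0 f1 g0 g1 : ℝ → ℝ) (q : ℝ)
    (hf0m : StrictMonoOn f0 (Icc 0 1)) (hf1m : StrictMonoOn f1 (Icc 0 1))
    (hf0c : ContinuousOn f0 (Icc 0 1)) (hf1c : ContinuousOn f1 (Icc 0 1))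
    (hf0map : MapsTo f0 (Icc 0 1) (Icc 0 1)) (hf1map : MapsTo f1 (Icc 0 1) (Icc 0 1))
    (hf0lip : ∃ c, 0 ≤ c ∧ c < 1 ∧ ∀ x ∈ Icc (0:ℝ) 1, ∀ y ∈ Icc (0:ℝ) 1, |f0 x - f0 y| ≤ c * |x - y|)
    (hf1lip : ∃ c, 0 ≤ c ∧ c < 1 ∧ ∀ x ∈ Icc (0:ℝ) 1, ∀ y ∈ Icc (0:ℝ) 1, |f1 x - f1 y| ≤ c * |x - y|)
    (hf00 : f0 0 = 0) (hf11 : f1 1 = 1)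
    (hf10pos : 0 < f1 0) (hoverf0f1 : f1 0 < f0 1) (hf01lt : f0 1 < 1)
    (hq : q ∈ Ioo (f1 0) (f0 1))
    (hg0 : ∀ x ∈ Icc (0:ℝ) 1, g0 (f0 x) = x) (hg1 : ∀ x ∈ Icc (0:ℝ) 1, g1 (f1 x) = x) :
    closure (tauPlus g0 g1 q '' (Icc 0 1)) =
      tauPlus g0 g1 q '' (Icc 0 1) ∪ tauMinus g0 g1 q '' (Icc 0 1) ∧
    closure (tauMinus g0 g1 q '' (Icc 0 1)) =
      tauPlus g0 g1 q '' (Icc 0 1) ∪ tauMinus g0 g1 q '' (Icc 0 1) := by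
  obtain ⟨c0, hc00, hc01, hlip0⟩ := hf0lip
  obtain ⟨c1, hc10, hc11, hlip1⟩ := hf1lip
  have H : Ctx f0 f1 g0 g1 q (max c0 c1) :=
    { hf0m := hf0m, hf1m := hf1m, hf0c := hf0c, hf1c := hf1c,
      hf0map := hf0map, hf1map := hf1map,
      hc0 := le_trans hc00 (le_max_left _ _),
      hc1 := max_lt hc01 hc11,
      hf0lip := fun x hx y hy =>
        le_trans (hlip0 x hx y hy) (mul_le_mul_of_nonneg_right (le_max_left _ _) (abs_nonneg _)),
      hf1lip := fun x hx y hy =>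
        le_trans (hlip1 x hx y hy) (mul_le_mul_of_nonneg_right (le_max_right _ _) (abs_nonneg _)),
      hf00 := hf00, hf11 := hf11, hf10pos := hf10pos,
      hq1 := hq.1, hq2 := hq.2, hf01lt := hf01lt, hg0 := hg0, hg1 := hg1 }
  exact H.main
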